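/- Let A be a differentiable Pickands dependence function and Ĉ(u,v) = exp(−A(−log u, −log v)). If 0 ≤ A_2(1,y) ≤ 1 for all y ≥ 0, then for all 0 < t < 1 and 0 < v ≤ 1, Ĉ_v(t,v)/t ≤ v^{A_2(1,0)−1}, where Ĉ_v = ∂Ĉ/∂v and A_2 = ∂A/∂v. In particular t ↦ exp(log t · (A(1, log v / log t) − 1)) is nonincreasing on (0,1) with limit v^{A_2(1,0)} as t ↓ 0. -/

import Mathlib

open Filter Set Real
open scoped Topology


section Aux
variable {A : ℝ → ℝ → ℝ}

lemma aux_phi_convex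
    (hconvex : ConvexOn ℝ (Ici (0:ℝ) ×ˢ Ici (0:ℝ)) fun p : ℝ × ℝ => A p.1 p.2) :
    ConvexOn ℝ (Ici (0:ℝ)) (fun y => A 1 y) := by
  refine ⟨convex_Ici 0, fun p hp q hq a b ha hb hab => ?_⟩
  have h := hconvex.2 (x := ((1:ℝ), p)) (y := ((1:ℝ), q))
    ⟨mem_Ici.2 zero_le_one, hp⟩ ⟨mem_Ici.2 zero_le_one, hq⟩ ha hb hab
  have h1 : a * 1 + b * 1 = (1:ℝ) := by linarith
  simpa [Prod.smul_mk, Prod.mk_add_mk, smul_eq_mul, h1, hab] using h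

lemma aux_psi_convex
    (hconvex : ConvexOn ℝ (Ici (0:ℝ) ×ˢ Ici (0:ℝ)) fun p : ℝ × ℝ => A p.1 p.2)
    {x : ℝ} (hx : 0 ≤ x) :
    ConvexOn ℝ (Ici (0:ℝ)) (fun s => A s x) := by
  refine ⟨convex_Ici 0, fun p hp q hq a b ha hb hab => ?_⟩
  have h := hconvex.2 (x := (p, x)) (y := (q, x))
    ⟨hp, mem_Ici.2 hx⟩ ⟨hq, mem_Ici.2 hx⟩ ha hb hab
  have h1 : a * x + b * x = x := by nlinarith
  simpa [Prod.smul_mk, Prod.mk_add_mk, smul_eq_mul, h1, hab] using h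

end Aux

section Aux2
variable {A : ℝ → ℝ → ℝ}

lemma aux_A10 (hbound : ∀ u v : ℝ, 0 ≤ u → 0 ≤ v → max u v ≤ A u v ∧ A u v ≤ u + v) :
    A 1 0 = 1 := by
  have h := hbound 1 0 zero_le_one le_rfl
  have h1 : (max 1 0 : ℝ) = 1 := by norm_num
  rw [h1] at h
  linarith [h.1, h.2]

lemma aux_homog (hhomog : ∀ c : ℝ, 0 ≤ c → ∀ u v : ℝ, 0 ≤ u → 0 ≤ v → A (c * u) (c * v) = c * A u v)
    {s x : ℝ} (hs : 0 < s) (hx : 0 ≤ x) : A s x = s * A 1 (x / s) := by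
  have h := hhomog s hs.le 1 (x / s) zero_le_one (div_nonneg hx hs.le)
  rw [mul_one, mul_div_cancel₀ _ hs.ne'] at h
  exact h

/-- Tangent line inequality at 0 : `1 + A2 0 * y ≤ A 1 y` for `y ≥ 0`. -/
lemma aux_tangent
    (hconvex : ConvexOn ℝ (Ici (0:ℝ) ×ˢ Ici (0:ℝ)) fun p : ℝ × ℝ => A p.1 p.2)
    (hbound : ∀ u v : ℝ, 0 ≤ u → 0 ≤ v → max u v ≤ A u v ∧ A u v ≤ u + v)
    {A2 : ℝ → ℝ} (hA2 : ∀ y : ℝ, 0 ≤ y → HasDerivAt (fun w => A 1 w) (A2 y) y)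
    {y : ℝ} (hy : 0 ≤ y) : 1 + A2 0 * y ≤ A 1 y := by
  rcases eq_or_lt_of_le hy with rfl | hy'
  · simp [aux_A10 hbound]
  · have h := (aux_phi_convex hconvex).le_slope_of_hasDerivAt
      (mem_Ici.2 le_rfl) (mem_Ici.2 hy) hy' (hA2 0 le_rfl)
    rw [slope_def_field] at h
    rw [aux_A10 hbound, sub_zero] at h
    have h2 := (le_div_iff₀ hy').1 h
    linarith

end Aux2

section Aux3
variable {A : ℝ → ℝ → ℝ}

/-- `A s x ≥ s + A2 0 * x` for `s > 0`, `x ≥ 0`. -/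
lemma aux_lower
    (hconvex : ConvexOn ℝ (Ici (0:ℝ) ×ˢ Ici (0:ℝ)) fun p : ℝ × ℝ => A p.1 p.2)
    (hhomog : ∀ c : ℝ, 0 ≤ c → ∀ u v : ℝ, 0 ≤ u → 0 ≤ v → A (c * u) (c * v) = c * A u v)
    (hbound : ∀ u v : ℝ, 0 ≤ u → 0 ≤ v → max u v ≤ A u v ∧ A u v ≤ u + v)
    {A2 : ℝ → ℝ} (hA2 : ∀ y : ℝ, 0 ≤ y → HasDerivAt (fun w => A 1 w) (A2 y) y)
    {s x : ℝ} (hs : 0 < s) (hx : 0 ≤ x) : s + A2 0 * x ≤ A s x := by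
  rw [aux_homog hhomog hs hx]
  have ht := aux_tangent hconvex hbound hA2 (div_nonneg hx hs.le)
  have h := mul_le_mul_of_nonneg_left ht hs.le
  calc s + A2 0 * x = s * (1 + A2 0 * (x / s)) := by field_simp
    _ ≤ s * A 1 (x / s) := h

/-- `s ↦ A s x - s` is antitone on `(0,∞)` (in fact `[0,∞)`). -/
lemma aux_antitone
    (hconvex : ConvexOn ℝ (Ici (0:ℝ) ×ˢ Ici (0:ℝ)) fun p : ℝ × ℝ => A p.1 p.2)
    (hbound : ∀ u v : ℝ, 0 ≤ u → 0 ≤ v → max u v ≤ A u v ∧ A u v ≤ u + v)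
    {x : ℝ} (hx : 0 ≤ x) {s₁ s₂ : ℝ} (h1 : 0 ≤ s₁) (h12 : s₁ ≤ s₂) :
    A s₂ x - s₂ ≤ A s₁ x - s₁ := by
  rcases eq_or_lt_of_le h12 with rfl | hlt
  · exact le_rfl
  · by_contra hcon
    push_neg at hcon
    set ψ : ℝ → ℝ := fun s => A s x - s with hψ
    have hψconv : ConvexOn ℝ (Ici (0:ℝ)) ψ := by
      have := (aux_psi_convex hconvex hx).sub (concaveOn_id (convex_Ici 0))
      exact this
    have h2 : 0 ≤ s₂ := h1.trans h12
    set m : ℝ := (ψ s₂ - ψ s₁) / (s₂ - s₁) with hm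
    have hmpos : 0 < m := div_pos (by simp only [ψ]; linarith) (by linarith)
    set z : ℝ := s₂ + (x + 1) / m with hz
    have hzgt : s₂ < z := by
      have h0 : 0 < (x + 1) / m := div_pos (by linarith) hmpos
      rw [hz]; linarith
    have hslope := hψconv.slope_mono_adjacent (mem_Ici.2 h1) (mem_Ici.2 (h2.trans hzgt.le)) hlt hzgt
    -- (ψ s₂ - ψ s₁)/(s₂-s₁) ≤ (ψ z - ψ s₂)/(z - s₂)
    have hzx : ψ z ≤ x := by
      have := (hbound z x (by linarith) hx).2
      simp only [ψ]; linarith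
    have hs2pos : 0 ≤ ψ s₂ := by
      have := (hbound s₂ x h2 hx).1
      have : s₂ ≤ A s₂ x := le_trans (le_max_left _ _) this
      simp only [ψ]; linarith
    have hkey : m ≤ (ψ z - ψ s₂) / (z - s₂) := hslope
    have hzs : z - s₂ = (x + 1) / m := by simp [hz]
    have : m * (z - s₂) ≤ ψ z - ψ s₂ := by
      rw [le_div_iff₀ (by linarith : (0:ℝ) < z - s₂)] at hkey
      linarith
    rw [hzs, mul_div_cancel₀ _ hmpos.ne'] at this
    linarith

end Aux3

section Aux4
variable {A : ℝ → ℝ → ℝ}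

lemma aux_deriv2
    (hhomog : ∀ c : ℝ, 0 ≤ c → ∀ u v : ℝ, 0 ≤ u → 0 ≤ v → A (c * u) (c * v) = c * A u v)
    (hdiff : Differentiable ℝ fun p : ℝ × ℝ => A p.1 p.2)
    {A2 : ℝ → ℝ} (hA2 : ∀ y : ℝ, 0 ≤ y → HasDerivAt (fun w => A 1 w) (A2 y) y)
    {s x : ℝ} (hs : 0 < s) (hx : 0 ≤ x) :
    HasDerivAt (fun w => A s w) (A2 (x / s)) x := by
  -- the genuine derivative coming from differentiability of A
  have hcurve : HasDerivAt (fun w : ℝ => ((s, w) : ℝ × ℝ)) ((0 : ℝ), (1 : ℝ)) x :=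
    HasDerivAt.prodMk (hasDerivAt_const x s) (hasDerivAt_id x)
  have hf : HasDerivAt (fun w => A s w)
      ((fderiv ℝ (fun p : ℝ × ℝ => A p.1 p.2) (s, x)) (0, 1)) x :=
    ((hdiff (s, x)).hasFDerivAt).comp_hasDerivAt x hcurve
  -- the scaled function
  have hinner : HasDerivAt (fun w : ℝ => w / s) (1 / s) x := by
    simpa using (hasDerivAt_id x).div_const s
  have hcomp : HasDerivAt (fun w : ℝ => A 1 (w / s)) (A2 (x / s) * (1 / s)) x :=
    (hA2 (x / s) (div_nonneg hx hs.le)).comp x hinner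
  have hg : HasDerivAt (fun w : ℝ => s * A 1 (w / s)) (A2 (x / s)) x := by
    have := hcomp.const_mul s
    have e : s * (A2 (x / s) * (1 / s)) = A2 (x / s) := by field_simp
    rwa [e] at this
  -- they agree on Ici 0
  have heq : ∀ w ∈ Ici (0:ℝ), A s w = s * A 1 (w / s) := fun w hw =>
    aux_homog hhomog hs hw
  have hgW : HasDerivWithinAt (fun w => A s w) (A2 (x / s)) (Ici 0) x := by
    refine (hg.hasDerivWithinAt).congr heq (heq x hx)
  have hfW : HasDerivWithinAt (fun w => A s w)
      ((fderiv ℝ (fun p : ℝ × ℝ => A p.1 p.2) (s, x)) (0, 1)) (Ici 0) x :=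
    hf.hasDerivWithinAt
  have hud : UniqueDiffWithinAt ℝ (Ici (0:ℝ)) x := uniqueDiffOn_Ici 0 x hx
  have : (fderiv ℝ (fun p : ℝ × ℝ => A p.1 p.2) (s, x)) (0, 1) = A2 (x / s) := by
    rw [← hfW.derivWithin hud, hgW.derivWithin hud]
  rwa [this] at hf

end Aux4

/-- For an extreme value copula `Ĉ(u,v) = exp(-A(-log u, -log v))` with a
differentiable Pickands dependence function `A` satisfying `0 ≤ A_2(1,y) ≤ 1` for all
`y ≥ 0`, one has `Ĉ_v(t,v)/t ≤ v^{A_2(1,0)-1}` for all `0 < t < 1` and `0 < v ≤ 1`.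
Moreover `t ↦ exp(log t · (A(1, log v/log t) - 1))` is nonincreasing on `(0,1)` with
limit `v^{A_2(1,0)}` as `t ↓ 0`. -/
theorem extreme_value_copula_Cv_bound
    (A : ℝ → ℝ → ℝ)
    (hconvex : ConvexOn ℝ (Ici (0:ℝ) ×ˢ Ici (0:ℝ)) fun p : ℝ × ℝ => A p.1 p.2)
    (hhomog : ∀ c : ℝ, 0 ≤ c → ∀ u v : ℝ, 0 ≤ u → 0 ≤ v → A (c * u) (c * v) = c * A u v)
    (hbound : ∀ u v : ℝ, 0 ≤ u → 0 ≤ v → max u v ≤ A u v ∧ A u v ≤ u + v)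
    (hdiff : Differentiable ℝ fun p : ℝ × ℝ => A p.1 p.2)
    (A2 : ℝ → ℝ) (hA2 : ∀ y : ℝ, 0 ≤ y → HasDerivAt (fun w => A 1 w) (A2 y) y)
    (hA2bound : ∀ y : ℝ, 0 ≤ y → A2 y ∈ Icc (0:ℝ) 1)
    (Chat : ℝ → ℝ → ℝ)
    (hChat : ∀ u v : ℝ, 0 < u → 0 < v →
      Chat u v = Real.exp (-A (-Real.log u) (-Real.log v))) :
    (∀ t : ℝ, 0 < t → t < 1 → ∀ v : ℝ, 0 < v → v ≤ 1 →
      deriv (fun w => Chat t w) v / t ≤ v ^ (A2 0 - 1)) ∧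
    (∀ v : ℝ, 0 < v → v ≤ 1 →
      AntitoneOn (fun t => Real.exp (Real.log t * (A 1 (Real.log v / Real.log t) - 1)))
        (Ioo (0:ℝ) 1) ∧
      Tendsto (fun t => Real.exp (Real.log t * (A 1 (Real.log v / Real.log t) - 1)))
        (𝓝[>] (0:ℝ)) (𝓝 (v ^ A2 0))) := by
  constructor
  · -- Part 1 : derivative bound
    intro t ht ht1 v hv hv1
    set s : ℝ := -Real.log t with hsdef
    set x : ℝ := -Real.log v with hxdef
    have hs : 0 < s := by
      have := Real.log_neg ht ht1; rw [hsdef]; linarith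
    have hx : 0 ≤ x := by
      have := Real.log_nonpos hv.le hv1; rw [hxdef]; linarith
    have hAd : HasDerivAt (fun w => A s w) (A2 (x / s)) x :=
      aux_deriv2 hhomog hdiff hA2 hs hx
    have hlog : HasDerivAt (fun w : ℝ => -Real.log w) (-(v⁻¹)) v :=
      (Real.hasDerivAt_log hv.ne').neg
    have hAd' : HasDerivAt (fun w => A s w) (A2 (x / s)) (-Real.log v) := by
      rw [← hxdef]; exact hAd
    have hAc : HasDerivAt (fun w => A s (-Real.log w)) (A2 (x / s) * -(v⁻¹)) v :=
      hAd'.comp v hlog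
    have hexp : HasDerivAt (fun w => Real.exp (-A s (-Real.log w)))
        (Real.exp (-A s (-Real.log v)) * -(A2 (x / s) * -(v⁻¹))) v := hAc.neg.exp
    have hev : (fun w => Chat t w) =ᶠ[𝓝 v] (fun w => Real.exp (-A s (-Real.log w))) := by
      filter_upwards [eventually_gt_nhds hv] with w hw
      rw [hChat t w ht hw, hsdef]
    have hderiv : deriv (fun w => Chat t w) v
        = Real.exp (-A s x) * (A2 (x / s) * v⁻¹) := by
      rw [hev.deriv_eq, hexp.deriv, ← hxdef]
      ring
    rw [hderiv]
    -- key exponential bound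
    have ht' : t = Real.exp (-s) := by rw [hsdef, neg_neg, Real.exp_log ht]
    have hkey : Real.exp (-A s x) / t ≤ v ^ A2 0 := by
      rw [ht', ← Real.exp_sub]
      have hlow := aux_lower hconvex hhomog hbound hA2 hs hx
      have harg : -A s x - -s ≤ A2 0 * Real.log v := by
        rw [hxdef] at hlow; nlinarith [hlow]
      calc Real.exp (-A s x - -s) ≤ Real.exp (A2 0 * Real.log v) := Real.exp_le_exp.2 harg
        _ = v ^ A2 0 := by rw [Real.rpow_def_of_pos hv, mul_comm]
    have hA2b := hA2bound (x / s) (div_nonneg hx hs.le)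
    have hE : 0 ≤ Real.exp (-A s x) / t := by positivity
    calc Real.exp (-A s x) * (A2 (x / s) * v⁻¹) / t
        = Real.exp (-A s x) / t * A2 (x / s) * v⁻¹ := by ring
      _ ≤ v ^ A2 0 * 1 * v⁻¹ := by
          apply mul_le_mul_of_nonneg_right _ (inv_nonneg.2 hv.le)
          exact mul_le_mul hkey hA2b.2 hA2b.1 (Real.rpow_nonneg hv.le _)
      _ = v ^ (A2 0 - 1) := by
          rw [Real.rpow_sub hv, Real.rpow_one, mul_one, div_eq_mul_inv]
  · -- Part 2 : monotonicity and limit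
    intro v hv hv1
    set x : ℝ := -Real.log v with hxdef
    have hx : 0 ≤ x := by
      have := Real.log_nonpos hv.le hv1; rw [hxdef]; linarith
    have hrepr : ∀ t ∈ Ioo (0:ℝ) 1,
        Real.log t * (A 1 (Real.log v / Real.log t) - 1)
          = -Real.log t - A (-Real.log t) x := by
      rintro t ⟨ht0, ht1⟩
      have hs : 0 < -Real.log t := by have := Real.log_neg ht0 ht1; linarith
      have hyy : Real.log v / Real.log t = x / (-Real.log t) := by
        rw [hxdef, neg_div_neg_eq]
      rw [hyy, aux_homog hhomog hs hx]
      ring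
    constructor
    · -- antitone
      intro t1 h1 t2 h2 h12
      simp only
      rw [hrepr t1 h1, hrepr t2 h2, Real.exp_le_exp]
      have hs2 : 0 < -Real.log t2 := by have := Real.log_neg h2.1 h2.2; linarith
      have hle : -Real.log t2 ≤ -Real.log t1 := by
        have := Real.log_le_log h1.1 h12; linarith
      have := aux_antitone hconvex hbound hx hs2.le hle
      linarith
    · -- limit
      rcases eq_or_lt_of_le hv1 with rfl | hvlt
      · simp only [Real.log_one, zero_div, aux_A10 hbound, sub_self, mul_zero,
          Real.exp_zero, Real.one_rpow]
        exact tendsto_const_nhds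
      · have hlv : Real.log v < 0 := Real.log_neg hv hvlt
        have hslope : Tendsto (slope (fun w => A 1 w) 0) (𝓝[≠] (0:ℝ)) (𝓝 (A2 0)) :=
          hasDerivAt_iff_tendsto_slope.1 (hA2 0 le_rfl)
        have hy0 : Tendsto (fun t => Real.log v / Real.log t) (𝓝[>] (0:ℝ)) (𝓝[>] (0:ℝ)) := by
          rw [tendsto_nhdsWithin_iff]
          constructor
          · have h1 : Tendsto (fun t : ℝ => -Real.log t) (𝓝[>] (0:ℝ)) atTop :=
              tendsto_neg_atBot_atTop.comp Real.tendsto_log_nhdsGT_zero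
            have h2 : Tendsto (fun t : ℝ => (-Real.log t)⁻¹) (𝓝[>] (0:ℝ)) (𝓝 0) :=
              h1.inv_tendsto_atTop
            have h3 := h2.const_mul (-Real.log v)
            rw [mul_zero] at h3
            refine h3.congr fun t => ?_
            rw [div_eq_mul_inv, inv_neg]
            ring
          · filter_upwards [self_mem_nhdsWithin,
              (eventually_lt_nhds one_pos).filter_mono nhdsWithin_le_nhds] with t ht0 ht1
            exact mem_Ioi.2 (div_pos_of_neg_of_neg hlv (Real.log_neg ht0 ht1))
        have hcomp : Tendsto (fun t => slope (fun w => A 1 w) 0 (Real.log v / Real.log t))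
            (𝓝[>] (0:ℝ)) (𝓝 (A2 0)) :=
          hslope.comp (hy0.mono_right (nhdsWithin_mono 0 fun y hy => ne_of_gt hy))
        have hmul := hcomp.const_mul (Real.log v)
        have hfinal := (Real.continuous_exp.tendsto _).comp hmul
        rw [Real.rpow_def_of_pos hv]
        refine Tendsto.congr' ?_ hfinal
        filter_upwards [self_mem_nhdsWithin,
          (eventually_lt_nhds one_pos).filter_mono nhdsWithin_le_nhds] with t ht0 ht1
        have hlt : Real.log t < 0 := Real.log_neg ht0 ht1
        have hypos : 0 < Real.log v / Real.log t := div_pos_of_neg_of_neg hlv hlt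
        simp only [Function.comp]
        congr 1
        rw [slope_def_field, aux_A10 hbound, sub_zero]
        field_simp [hlv.ne, hlt.ne]
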